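/- Every real symmetric positive definite $2 \times 2$ matrix $Q$ with $q_{12} < 0$ can be transformed, by finitely many applications of the moves $Q \mapsto X_1^t Q X_1$ and $Q \mapsto X_2^t Q X_2$ with $X_1 = \begin{pmatrix}1&0\\1&1\end{pmatrix}$ and $X_2 = \begin{pmatrix}1&1\\0&1\end{pmatrix}$, into a matrix $Q'$ satisfying $q'_{12} \leq 0$, $q'_{11} + q'_{12} \geq 0$, and $q'_{22} + q'_{12} \geq 0$. -/

import Mathlib

open Matrix

private lemma tfin2 (a b c d : ℝ) : !![a,b;c,d]ᵀ = !![a,c;b,d] := by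
  ext i j; fin_cases i <;> fin_cases j <;> simp

private lemma X1_conj (Q : Matrix (Fin 2) (Fin 2) ℝ) (hsym : Q 1 0 = Q 0 1) :
    !![(1:ℝ),0;1,1]ᵀ * Q * !![(1:ℝ),0;1,1] =
      !![Q 0 0 + 2*Q 0 1 + Q 1 1, Q 0 1 + Q 1 1; Q 0 1 + Q 1 1, Q 1 1] := by
  rw [tfin2]
  ext i j
  fin_cases i <;> fin_cases j <;>
    simp [Matrix.mul_apply, Matrix.vecMul, dotProduct, Fin.sum_univ_two, hsym] <;> ring

private lemma X2_conj (Q : Matrix (Fin 2) (Fin 2) ℝ) (hsym : Q 1 0 = Q 0 1) :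
    !![(1:ℝ),1;0,1]ᵀ * Q * !![(1:ℝ),1;0,1] =
      !![Q 0 0, Q 0 0 + Q 0 1; Q 0 0 + Q 0 1, Q 0 0 + 2*Q 0 1 + Q 1 1] := by
  rw [tfin2]
  ext i j
  fin_cases i <;> fin_cases j <;>
    simp [Matrix.mul_apply, Matrix.vecMul, dotProduct, Fin.sum_univ_two, hsym] <;> ring

private lemma selling_aux (d m0 : ℝ) (hd : 0 < d) (hm0 : 0 < m0) :
    ∀ n : ℕ, ∀ Q : Matrix (Fin 2) (Fin 2) ℝ,
      Q 1 0 = Q 0 1 → Q 0 1 < 0 → 0 < Q 0 0 → 0 < Q 1 1 →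
      Q 0 0 * Q 1 1 - Q 0 1 ^ 2 = d → Q 0 0 + Q 1 1 ≤ m0 →
      Q 0 0 + Q 1 1 ≤ n * (d / m0) →
      ∃ L : List (Matrix (Fin 2) (Fin 2) ℝ),
        (∀ M ∈ L, M = !![(1 : ℝ), 0; 1, 1] ∨ M = !![(1 : ℝ), 1; 0, 1]) ∧
        ((L.prodᵀ * Q * L.prod) 0 1 ≤ 0 ∧
          0 ≤ (L.prodᵀ * Q * L.prod) 0 0 + (L.prodᵀ * Q * L.prod) 0 1 ∧
          0 ≤ (L.prodᵀ * Q * L.prod) 1 1 + (L.prodᵀ * Q * L.prod) 0 1) := by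
  intro n
  induction n with
  | zero =>
    intro Q _ _ ha hc _ _ hsize
    exfalso
    simp only [Nat.cast_zero, zero_mul] at hsize
    linarith
  | succ n ih =>
    intro Q hsym hb ha hc hdet hm hsize
    have hdm0 : 0 < d / m0 := div_pos hd hm0
    by_cases h1 : 0 ≤ Q 0 0 + Q 0 1
    · by_cases h2 : 0 ≤ Q 1 1 + Q 0 1
      · exact ⟨[], by simp, by simpa using ⟨le_of_lt hb, h1, h2⟩⟩
      · -- apply X1; Q 1 1 + Q 0 1 < 0
        push_neg at h2
        set Q' := !![Q 0 0 + 2*Q 0 1 + Q 1 1, Q 0 1 + Q 1 1; Q 0 1 + Q 1 1, Q 1 1] with hQ'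
        have hent00 : Q' 0 0 = Q 0 0 + 2*Q 0 1 + Q 1 1 := by simp [hQ']
        have hent01 : Q' 0 1 = Q 0 1 + Q 1 1 := by simp [hQ']
        have hent10 : Q' 1 0 = Q 0 1 + Q 1 1 := by simp [hQ']
        have hent11 : Q' 1 1 = Q 1 1 := by simp [hQ']
        have hcge : d / m0 ≤ Q 1 1 := by
          rw [div_le_iff₀ hm0]
          nlinarith [sq_nonneg (Q 0 1)]
        have ha' : 0 < Q' 0 0 := by
          rw [hent00]
          nlinarith [sq_nonneg (Q 0 1 + Q 1 1)]
        obtain ⟨L, hLmem, hred⟩ := ih Q'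
          (by rw [hent10, hent01])
          (by rw [hent01]; linarith)
          ha'
          (by rw [hent11]; exact hc)
          (by rw [hent00, hent01, hent11]; linear_combination hdet)
          (by rw [hent00, hent11]; linarith)
          (by rw [hent00, hent11]; push_cast at hsize ⊢; linarith)
        refine ⟨!![(1:ℝ),0;1,1] :: L, ?_, ?_⟩
        · intro M hM
          rcases List.mem_cons.mp hM with h | h
          · exact Or.inl h
          · exact hLmem M h
        · have key : (!![(1:ℝ),0;1,1] :: L).prodᵀ * Q * (!![(1:ℝ),0;1,1] :: L).prod
              = L.prodᵀ * Q' * L.prod := by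
            rw [List.prod_cons, Matrix.transpose_mul, hQ', ← X1_conj Q hsym]
            noncomm_ring
          rw [key]
          exact hred
    · -- apply X2; Q 0 0 + Q 0 1 < 0
      push_neg at h1
      set Q' := !![Q 0 0, Q 0 0 + Q 0 1; Q 0 0 + Q 0 1, Q 0 0 + 2*Q 0 1 + Q 1 1] with hQ'
      have hent00 : Q' 0 0 = Q 0 0 := by simp [hQ']
      have hent01 : Q' 0 1 = Q 0 0 + Q 0 1 := by simp [hQ']
      have hent10 : Q' 1 0 = Q 0 0 + Q 0 1 := by simp [hQ']
      have hent11 : Q' 1 1 = Q 0 0 + 2*Q 0 1 + Q 1 1 := by simp [hQ']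
      have hage : d / m0 ≤ Q 0 0 := by
        rw [div_le_iff₀ hm0]
        nlinarith [sq_nonneg (Q 0 1)]
      have hc' : 0 < Q' 1 1 := by
        rw [hent11]
        nlinarith [sq_nonneg (Q 0 0 + Q 0 1)]
      obtain ⟨L, hLmem, hred⟩ := ih Q'
        (by rw [hent10, hent01])
        (by rw [hent01]; linarith)
        (by rw [hent00]; exact ha)
        hc'
        (by rw [hent00, hent01, hent11]; linear_combination hdet)
        (by rw [hent00, hent11]; linarith)
        (by rw [hent00, hent11]; push_cast at hsize ⊢; linarith)
      refine ⟨!![(1:ℝ),1;0,1] :: L, ?_, ?_⟩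
      · intro M hM
        rcases List.mem_cons.mp hM with h | h
        · exact Or.inr h
        · exact hLmem M h
      · have key : (!![(1:ℝ),1;0,1] :: L).prodᵀ * Q * (!![(1:ℝ),1;0,1] :: L).prod
            = L.prodᵀ * Q' * L.prod := by
          rw [List.prod_cons, Matrix.transpose_mul, hQ', ← X2_conj Q hsym]
          noncomm_ring
        rw [key]
        exact hred

/-- **Selling reduction in dimension 2.** Every real symmetric positive definite
`2 × 2` matrix `Q` with `q₁₂ < 0` can be transformed, by finitely many moves
`Q ↦ Xᵀ Q X` with `X ∈ {!![1,0;1,1], !![1,1;0,1]}`, into a matrix `Q'` with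
`q'₁₂ ≤ 0`, `q'₁₁ + q'₁₂ ≥ 0` and `q'₂₂ + q'₁₂ ≥ 0`. -/
theorem selling_reduction_terminates (Q : Matrix (Fin 2) (Fin 2) ℝ)
    (hQ : Q.PosDef) (h12 : Q 0 1 < 0) :
    ∃ L : List (Matrix (Fin 2) (Fin 2) ℝ),
      (∀ M ∈ L, M = !![(1 : ℝ), 0; 1, 1] ∨ M = !![(1 : ℝ), 1; 0, 1]) ∧
      ((L.prodᵀ * Q * L.prod) 0 1 ≤ 0 ∧
        0 ≤ (L.prodᵀ * Q * L.prod) 0 0 + (L.prodᵀ * Q * L.prod) 0 1 ∧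
        0 ≤ (L.prodᵀ * Q * L.prod) 1 1 + (L.prodᵀ * Q * L.prod) 0 1) := by
  have hsym : Q 1 0 = Q 0 1 := by
    have := hQ.1.apply 1 0
    simpa using this.symm
  have ha : 0 < Q 0 0 := by
    have h : (![1,0] : Fin 2 → ℝ) ≠ 0 := by
      intro h; have := congrFun h 0; simp at this
    have := hQ.dotProduct_mulVec_pos h
    simpa [dotProduct, Matrix.mulVec, Fin.sum_univ_two] using this
  have hc : 0 < Q 1 1 := by
    have h : (![0,1] : Fin 2 → ℝ) ≠ 0 := by
      intro h; have := congrFun h 1; simp at this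
    have := hQ.dotProduct_mulVec_pos h
    simpa [dotProduct, Matrix.mulVec, Fin.sum_univ_two] using this
  have hdet : 0 < Q 0 0 * Q 1 1 - Q 0 1 ^ 2 := by
    have := hQ.det_pos
    rw [Matrix.det_fin_two, hsym] at this
    nlinarith
  set d := Q 0 0 * Q 1 1 - Q 0 1 ^ 2 with hd
  set m0 := Q 0 0 + Q 1 1 with hm0def
  have hm0 : 0 < m0 := by positivity
  obtain ⟨n, hn⟩ := exists_nat_ge (m0 / (d / m0))
  have hsize : m0 ≤ n * (d / m0) := by
    rw [div_le_iff₀ (div_pos hdet hm0)] at hn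
    linarith
  exact selling_aux d m0 hdet hm0 n Q hsym h12 ha hc rfl le_rfl hsize
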